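/- Let a ≥ 3 be an odd integer and let E be the equation x + y = a·z. Then there exists a constant C ≥ 0 such that for every positive integer n, M_E(n) ≤ n²/(4a²) + C·n. -/

import Mathlib

open Finset

/-- The coloring: `1` iff `x ≡ a (mod 2a)` or `x mod a ∈ {1, …, (a-1)/2}`. -/
private def chiE (a : ℕ) : ℕ → Fin 2 := fun x =>
  if x % (2*a) = a ∨ (1 ≤ x % a ∧ 2 * (x % a) < a) then 1 else 0

private lemma chiE_eq_one {a x : ℕ} :
    chiE a x = 1 ↔ (x % (2*a) = a ∨ (1 ≤ x % a ∧ 2 * (x % a) < a)) := by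
  by_cases h : x % (2*a) = a ∨ (1 ≤ x % a ∧ 2 * (x % a) < a) <;> simp [chiE, h]

private lemma chiE_eq_zero {a x : ℕ} :
    chiE a x = 0 ↔ ¬ (x % (2*a) = a ∨ (1 ≤ x % a ∧ 2 * (x % a) < a)) := by
  by_cases h : x % (2*a) = a ∨ (1 ≤ x % a ∧ 2 * (x % a) < a) <;> simp [chiE, h]

private lemma fin_two_eq_one {c : Fin 2} (h : ¬ c = 0) : c = 1 := by
  fin_cases c <;> simp_all

/-- counting lemma: members of `[1,n]` in a residue class mod `M`. -/
private lemma count_mod_le (n M r : ℕ) (hM : 0 < M) :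
    ((Finset.Icc 1 n).filter (fun x => x % M = r)).card ≤ n / M + 1 := by
  have h : ((Finset.Icc 1 n).filter (fun x => x % M = r)).card
      ≤ (Finset.range (n / M + 1)).card := by
    apply Finset.card_le_card_of_injOn (fun x => x / M)
    · intro x hx
      simp only [Finset.mem_coe, Finset.mem_filter, Finset.mem_Icc] at hx
      simp only [Finset.mem_coe, Finset.mem_range]
      exact Nat.lt_succ_of_le (Nat.div_le_div_right hx.1.2)
    · intro x hx y hy hxy
      simp only [Finset.coe_filter, Finset.mem_Icc, Set.mem_setOf_eq] at hx hy
      have hxy' : x / M = y / M := hxy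
      have h1 := Nat.div_add_mod x M
      have h2 := Nat.div_add_mod y M
      have h3 : M * (x / M) + x % M = M * (y / M) + y % M := by
        rw [hxy', hx.2, hy.2]
      rw [h1, h2] at h3
      exact h3
  simpa using h

private lemma modA_of {a x : ℕ} (ha : 0 < a) (h : x % (2*a) = a) : x % a = 0 := by
  have h2 : x % (2*a) % a = x % a := Nat.mod_mod_of_dvd x ⟨2, by ring⟩
  rw [h, Nat.mod_self] at h2
  omega

private lemma mod2a_cases {a x : ℕ} (ha : 0 < a) (h : x % a = 0) :
    x % (2*a) = 0 ∨ x % (2*a) = a := by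
  have h1 : x % (2*a) % a = x % a := Nat.mod_mod_of_dvd x ⟨2, by ring⟩
  rw [h] at h1
  have h2 : x % (2*a) < 2*a := Nat.mod_lt x (by omega)
  obtain ⟨k, hk⟩ := Nat.dvd_of_mod_eq_zero h1
  have hk2 : k < 2 := by
    by_contra hc
    push_neg at hc
    have : a * 2 ≤ a * k := Nat.mul_le_mul_left a hc
    omega
  interval_cases k <;> omega

private lemma sum_mod {a x y z : ℕ} (ha : 0 < a) (h : x + y = a * z) :
    x % a + y % a = 0 ∨ x % a + y % a = a := by
  have hd : (x % a + y % a) % a = 0 := by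
    have h0 : (x + y) % a = 0 := by
      rw [h]; exact Nat.mul_mod_right a z
    rw [Nat.add_mod] at h0
    exact h0
  have hx := Nat.mod_lt x ha
  have hy := Nat.mod_lt y ha
  obtain ⟨k, hk⟩ := Nat.dvd_of_mod_eq_zero hd
  have hk2 : k < 2 := by
    by_contra hc
    push_neg at hc
    have : a * 2 ≤ a * k := Nat.mul_le_mul_left a hc
    omega
  interval_cases k <;> omega

/-- In a color-0 monochromatic solution both `x` and `y` are `≡ 0 (mod 2a)`. -/
private lemma case0 {a x y : ℕ} (ha : 3 ≤ a) (hodd : a % 2 = 1)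
    (hsum : x % a + y % a = 0 ∨ x % a + y % a = a)
    (hx : ¬ (x % (2*a) = a ∨ (1 ≤ x % a ∧ 2 * (x % a) < a)))
    (hy : ¬ (y % (2*a) = a ∨ (1 ≤ y % a ∧ 2 * (y % a) < a))) :
    x % (2*a) = 0 ∧ y % (2*a) = 0 := by
  have ha0 : 0 < a := by omega
  push_neg at hx hy
  have hxa := Nat.mod_lt x ha0
  have hya := Nat.mod_lt y ha0
  have hs : x % a = 0 ∧ y % a = 0 := by
    rcases Nat.eq_zero_or_pos (x % a) with h1 | h1
    · rcases Nat.eq_zero_or_pos (y % a) with h2 | h2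
      · exact ⟨h1, h2⟩
      · exfalso; have := hy.2 h2; omega
    · exfalso
      have hx2 := hx.2 h1
      rcases Nat.eq_zero_or_pos (y % a) with h2 | h2
      · omega
      · have hy2 := hy.2 h2; omega
  constructor
  · rcases mod2a_cases ha0 hs.1 with h | h
    · exact h
    · exact absurd h hx.1
  · rcases mod2a_cases ha0 hs.2 with h | h
    · exact h
    · exact absurd h hy.1

/-- In a color-1 monochromatic solution both `x` and `y` are `≡ a (mod 2a)`. -/
private lemma case1 {a x y : ℕ} (ha : 3 ≤ a) (hodd : a % 2 = 1)
    (hsum : x % a + y % a = 0 ∨ x % a + y % a = a)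
    (hx : x % (2*a) = a ∨ (1 ≤ x % a ∧ 2 * (x % a) < a))
    (hy : y % (2*a) = a ∨ (1 ≤ y % a ∧ 2 * (y % a) < a)) :
    x % (2*a) = a ∧ y % (2*a) = a := by
  have ha0 : 0 < a := by omega
  have hxa := Nat.mod_lt x ha0
  have hya := Nat.mod_lt y ha0
  rcases hx with hx1 | hx2
  · have hs : x % a = 0 := modA_of ha0 hx1
    rcases hy with hy1 | hy2
    · exact ⟨hx1, hy1⟩
    · exfalso; omega
  · exfalso
    rcases hy with hy1 | hy2
    · have ht : y % a = 0 := modA_of ha0 hy1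
      omega
    · omega

/-- Injectivity core: `(x, y mod 2a, z mod a, y / 2a²)` determine `y` and `z`. -/
private lemma key_inj {a x y y' z z' : ℕ} (ha : 3 ≤ a) (hodd : a % 2 = 1)
    (h1 : x + y = a * z) (h2 : x + y' = a * z')
    (hm : y % (2*a) = y' % (2*a)) (hz : z % a = z' % a)
    (hq : y / (2*a^2) = y' / (2*a^2)) : y = y' ∧ z = z' := by
  have ha0 : 0 < a := by omega
  have hy : y = y' := by
    have hd1 : ((2*a : ℕ) : ℤ) ∣ (y' : ℤ) - (y : ℤ) := Nat.ModEq.dvd hm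
    have hd2 : ((a : ℕ) : ℤ) ∣ (z' : ℤ) - (z : ℤ) := Nat.ModEq.dvd hz
    obtain ⟨w, hw⟩ := hd2
    have hyz : (y' : ℤ) - y = (a : ℤ) * ((a : ℤ) * w) := by
      have e1 : (x : ℤ) + y = a * z := by exact_mod_cast h1
      have e2 : (x : ℤ) + y' = a * z' := by exact_mod_cast h2
      have e3 : (y' : ℤ) - y = (a : ℤ) * ((z' : ℤ) - z) := by
        rw [mul_sub]; linarith
      rw [e3, hw]
    have h2w : (2 : ℤ) ∣ w := by
      obtain ⟨k, hk⟩ := hd1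
      push_cast at hk
      have hcancel : (a : ℤ) * ((a : ℤ) * w) = (a : ℤ) * (2 * k) := by
        rw [← hyz]; linarith
      have haz : (a : ℤ) ≠ 0 := by positivity
      have haw : (a : ℤ) * w = 2 * k := mul_left_cancel₀ haz hcancel
      have h2aw : (2 : ℤ) ∣ (a : ℤ) * w := ⟨k, haw⟩
      rcases (Int.prime_two.dvd_mul).mp h2aw with h | h
      · exfalso
        have hna : (2 : ℕ) ∣ a := by exact_mod_cast h
        omega
      · exact h
    obtain ⟨v, hv⟩ := h2w
    rw [hv] at hyz
    have hyy : (y' : ℤ) - y = 2 * (a : ℤ)^2 * v := by rw [hyz]; ring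
    have hb1 : 2*a^2 * (y / (2*a^2)) ≤ y := Nat.mul_div_le y (2*a^2)
    have hb2 : y < 2*a^2 * (y / (2*a^2)) + 2*a^2 := by
      have hmlt : y % (2*a^2) < 2*a^2 := Nat.mod_lt y (by positivity)
      have hdm := Nat.div_add_mod y (2*a^2)
      omega
    have hb3 : 2*a^2 * (y / (2*a^2)) ≤ y' := by
      rw [hq]; exact Nat.mul_div_le y' (2*a^2)
    have hb4 : y' < 2*a^2 * (y / (2*a^2)) + 2*a^2 := by
      have hmlt : y' % (2*a^2) < 2*a^2 := Nat.mod_lt y' (by positivity)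
      have hdm := Nat.div_add_mod y' (2*a^2)
      rw [hq]
      omega
    have B1 : ((2*a^2 * (y / (2*a^2)) : ℕ) : ℤ) ≤ (y : ℤ) := Nat.cast_le.mpr hb1
    have B2 : ((y : ℕ) : ℤ) < ((2*a^2 * (y / (2*a^2)) + 2*a^2 : ℕ) : ℤ) :=
      Nat.cast_lt.mpr hb2
    have B3 : ((2*a^2 * (y / (2*a^2)) : ℕ) : ℤ) ≤ (y' : ℤ) := Nat.cast_le.mpr hb3
    have B4 : ((y' : ℕ) : ℤ) < ((2*a^2 * (y / (2*a^2)) + 2*a^2 : ℕ) : ℤ) :=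
      Nat.cast_lt.mpr hb4
    push_cast at B1 B2 B3 B4
    have habs : |(y' : ℤ) - y| < 2*(a:ℤ)^2 := by
      rw [abs_lt]
      constructor <;> linarith
    rw [hyy] at habs
    have hv0 : v = 0 := by
      by_contra hv0
      have h1v : 1 ≤ |v| := by
        rcases lt_trichotomy v 0 with h | h | h
        · rw [abs_of_neg h]; omega
        · exact absurd h hv0
        · rw [abs_of_pos h]; omega
      have he : |2 * (a:ℤ)^2 * v| = 2*(a:ℤ)^2 * |v| := by
        rw [abs_mul, abs_of_pos (by positivity : (0:ℤ) < 2*(a:ℤ)^2)]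
      rw [he] at habs
      nlinarith [sq_nonneg ((a:ℤ))]
    rw [hv0, mul_zero] at hyy
    have hfin : (y' : ℤ) = y := by linarith
    exact_mod_cast hfin.symm
  refine ⟨hy, ?_⟩
  rw [hy] at h1
  have he : a * z = a * z' := by omega
  exact Nat.eq_of_mul_eq_mul_left ha0 he

/-- `z` is even when `x ≡ y ≡ a (mod 2a)`. -/
private lemma z_even {a x y z : ℕ} (ha : 0 < a) (h : x + y = a * z)
    (hx : x % (2*a) = a) (hy : y % (2*a) = a) : z % 2 = 0 := by
  have hdvd : (x + y) % (2*a) = 0 := by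
    rw [Nat.add_mod, hx, hy]
    have he : a + a = 2*a := by ring
    rw [he, Nat.mod_self]
  obtain ⟨k, hk⟩ := Nat.dvd_of_mod_eq_zero hdvd
  rw [h] at hk
  have he : a * z = a * (2 * k) := by rw [hk]; ring
  have hz := Nat.eq_of_mul_eq_mul_left ha he
  omega

/-- `z ≡ a (mod 2a)` implies `z` odd. -/
private lemma z_odd_of {a z : ℕ} (hodd : a % 2 = 1) (h : z % (2*a) = a) : z % 2 = 1 := by
  have hdm := Nat.div_add_mod z (2*a)
  rw [h] at hdm
  have h2 : (2*a*(z/(2*a)) + a) % 2 = 1 := by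
    rw [Nat.add_mod]
    have h3 : 2*a*(z/(2*a)) % 2 = 0 := by
      have he : 2*a*(z/(2*a)) = 2*(a*(z/(2*a))) := by ring
      rw [he]
      exact Nat.mul_mod_right 2 _
    omega
  rw [hdm] at h2
  exact h2

theorem stmt4 (a : ℕ) (ha : 3 ≤ a) (hodd : Odd a) :
    ∃ C : ℝ, 0 ≤ C ∧ ∀ n : ℕ, 0 < n →
      ∃ χ : ℕ → Fin 2,
        ((((Finset.Icc 1 n) ×ˢ (Finset.Icc 1 n) ×ˢ (Finset.Icc 1 n)).filter
          (fun p => p.1 + p.2.1 = a * p.2.2 ∧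
            χ p.1 = χ p.2.1 ∧ χ p.2.1 = χ p.2.2)).card : ℝ)
        ≤ (n : ℝ) ^ 2 / (4 * (a : ℝ) ^ 2) + C * n := by
  have ha0 : 0 < a := by omega
  have hodd2 : a % 2 = 1 := Nat.odd_iff.mp hodd
  refine ⟨(a : ℝ) + 1, by positivity, ?_⟩
  intro n hn
  refine ⟨chiE a, ?_⟩
  set F := (((Finset.Icc 1 n) ×ˢ (Finset.Icc 1 n) ×ˢ (Finset.Icc 1 n)).filter
      (fun p => p.1 + p.2.1 = a * p.2.2 ∧
        chiE a p.1 = chiE a p.2.1 ∧ chiE a p.2.1 = chiE a p.2.2)) with hF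
  have hnat : F.card ≤ (n/(2*a)+1) * ((n/(2*a^2)+1) * a) := by
    have hsplit : (F.filter (fun p => chiE a p.1 = 0)).card
        + (F.filter (fun p => ¬ chiE a p.1 = 0)).card = F.card :=
      Finset.card_filter_add_card_filter_not _
    have hb0 : (F.filter (fun p => chiE a p.1 = 0)).card
        ≤ (n/(2*a)+1) * ((n/(2*a^2)+1) *
            (((Finset.range a).filter (fun s => ¬(1 ≤ s ∧ 2*s < a))).card)) := by
      have hcc := Finset.card_le_card_of_injOn
        (s := F.filter (fun p => chiE a p.1 = 0))
        (t := ((Finset.Icc 1 n).filter (fun x => x % (2*a) = 0)) ×ˢ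
          (Finset.range (n/(2*a^2)+1)) ×ˢ
          ((Finset.range a).filter (fun s => ¬(1 ≤ s ∧ 2*s < a))))
        (fun p => (p.1, p.2.1/(2*a^2), p.2.2 % a))
        ?_ ?_
      · refine le_trans hcc ?_
        rw [Finset.card_product, Finset.card_product, Finset.card_range]
        exact Nat.mul_le_mul (count_mod_le n (2*a) 0 (by omega)) (le_refl _)
      · rintro ⟨x, y, z⟩ hp
        simp only [Finset.mem_coe, hF, Finset.mem_filter, Finset.mem_product, Finset.mem_Icc] at hp
        obtain ⟨⟨⟨hxI, hyI, hzI⟩, heq, hc1, hc2⟩, hc0⟩ := hp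
        have hcy : chiE a y = 0 := by rw [← hc1]; exact hc0
        have hcz : chiE a z = 0 := by rw [← hc2]; exact hcy
        rw [chiE_eq_zero] at hc0 hcy hcz
        have h0 := case0 ha hodd2 (sum_mod ha0 heq) hc0 hcy
        simp only [Finset.mem_coe, Finset.mem_product, Finset.mem_filter, Finset.mem_Icc,
          Finset.mem_range]
        refine ⟨⟨hxI, h0.1⟩, ?_, ?_⟩
        · exact Nat.lt_succ_of_le (Nat.div_le_div_right hyI.2)
        · exact ⟨Nat.mod_lt z ha0, fun hcon => hcz (Or.inr hcon)⟩
      · rintro ⟨x, y, z⟩ hp ⟨x', y', z'⟩ hq heq2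
        simp only [Finset.mem_coe, hF, Finset.mem_filter, Finset.mem_product,
          Finset.mem_Icc] at hp hq
        obtain ⟨⟨_, heqp, hc1p, hc2p⟩, hc0p⟩ := hp
        obtain ⟨⟨_, heqq, hc1q, hc2q⟩, hc0q⟩ := hq
        simp only [Prod.mk.injEq] at heq2
        obtain ⟨hxx, hqq, hzz⟩ := heq2
        have hcyp : chiE a y = 0 := by rw [← hc1p]; exact hc0p
        have hcyq : chiE a y' = 0 := by rw [← hc1q]; exact hc0q
        rw [chiE_eq_zero] at hc0p hcyp hc0q hcyq
        have h0p := case0 ha hodd2 (sum_mod ha0 heqp) hc0p hcyp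
        have h0q := case0 ha hodd2 (sum_mod ha0 heqq) hc0q hcyq
        subst hxx
        have hk := key_inj ha hodd2 heqp heqq (by rw [h0p.2, h0q.2]) hzz hqq
        simp [hk.1, hk.2]
    have hb1 : (F.filter (fun p => ¬ chiE a p.1 = 0)).card
        ≤ (n/(2*a)+1) * ((n/(2*a^2)+1) *
            (((Finset.range a).filter (fun s => 1 ≤ s ∧ 2*s < a)).card)) := by
      have hcc := Finset.card_le_card_of_injOn
        (s := F.filter (fun p => ¬ chiE a p.1 = 0))
        (t := ((Finset.Icc 1 n).filter (fun x => x % (2*a) = a)) ×ˢ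
          (Finset.range (n/(2*a^2)+1)) ×ˢ
          ((Finset.range a).filter (fun s => 1 ≤ s ∧ 2*s < a)))
        (fun p => (p.1, p.2.1/(2*a^2), p.2.2 % a))
        ?_ ?_
      · refine le_trans hcc ?_
        rw [Finset.card_product, Finset.card_product, Finset.card_range]
        exact Nat.mul_le_mul (count_mod_le n (2*a) a (by omega)) (le_refl _)
      · rintro ⟨x, y, z⟩ hp
        simp only [Finset.mem_coe, hF, Finset.mem_filter, Finset.mem_product, Finset.mem_Icc] at hp
        obtain ⟨⟨⟨hxI, hyI, hzI⟩, heq, hc1, hc2⟩, hc0⟩ := hp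
        have hcx : chiE a x = 1 := fin_two_eq_one hc0
        have hcy : chiE a y = 1 := by rw [← hc1]; exact hcx
        have hcz : chiE a z = 1 := by rw [← hc2]; exact hcy
        rw [chiE_eq_one] at hcx hcy hcz
        have h1 := case1 ha hodd2 (sum_mod ha0 heq) hcx hcy
        have hzev := z_even ha0 heq h1.1 h1.2
        have hzS : 1 ≤ z % a ∧ 2 * (z % a) < a := by
          rcases hcz with hza | hzs
          · exfalso
            have := z_odd_of hodd2 hza
            omega
          · exact hzs
        simp only [Finset.mem_coe, Finset.mem_product, Finset.mem_filter, Finset.mem_Icc,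
          Finset.mem_range]
        refine ⟨⟨hxI, h1.1⟩, ?_, ?_⟩
        · exact Nat.lt_succ_of_le (Nat.div_le_div_right hyI.2)
        · exact ⟨Nat.mod_lt z ha0, hzS⟩
      · rintro ⟨x, y, z⟩ hp ⟨x', y', z'⟩ hq heq2
        simp only [Finset.mem_coe, hF, Finset.mem_filter, Finset.mem_product,
          Finset.mem_Icc] at hp hq
        obtain ⟨⟨_, heqp, hc1p, hc2p⟩, hc0p⟩ := hp
        obtain ⟨⟨_, heqq, hc1q, hc2q⟩, hc0q⟩ := hq
        simp only [Prod.mk.injEq] at heq2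
        obtain ⟨hxx, hqq, hzz⟩ := heq2
        have hcxp : chiE a x = 1 := fin_two_eq_one hc0p
        have hcxq : chiE a x' = 1 := fin_two_eq_one hc0q
        have hcyp : chiE a y = 1 := by rw [← hc1p]; exact hcxp
        have hcyq : chiE a y' = 1 := by rw [← hc1q]; exact hcxq
        rw [chiE_eq_one] at hcxp hcyp hcxq hcyq
        have h1p := case1 ha hodd2 (sum_mod ha0 heqp) hcxp hcyp
        have h1q := case1 ha hodd2 (sum_mod ha0 heqq) hcxq hcyq
        subst hxx
        have hk := key_inj ha hodd2 heqp heqq (by rw [h1p.2, h1q.2]) hzz hqq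
        simp [hk.1, hk.2]
    have hRsum : (((Finset.range a).filter (fun s => 1 ≤ s ∧ 2*s < a)).card)
        + (((Finset.range a).filter (fun s => ¬(1 ≤ s ∧ 2*s < a))).card) = a := by
      have := Finset.card_filter_add_card_filter_not
        (s := Finset.range a) (p := fun s => 1 ≤ s ∧ 2*s < a)
      simpa using this
    calc F.card = (F.filter (fun p => chiE a p.1 = 0)).card
          + (F.filter (fun p => ¬ chiE a p.1 = 0)).card := hsplit.symm
      _ ≤ (n/(2*a)+1) * ((n/(2*a^2)+1) *
            (((Finset.range a).filter (fun s => ¬(1 ≤ s ∧ 2*s < a))).card))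
          + (n/(2*a)+1) * ((n/(2*a^2)+1) *
            (((Finset.range a).filter (fun s => 1 ≤ s ∧ 2*s < a)).card)) :=
        Nat.add_le_add hb0 hb1
      _ = (n/(2*a)+1) * ((n/(2*a^2)+1) *
            ((((Finset.range a).filter (fun s => 1 ≤ s ∧ 2*s < a)).card)
            + (((Finset.range a).filter (fun s => ¬(1 ≤ s ∧ 2*s < a))).card))) := by
        ring
      _ = (n/(2*a)+1) * ((n/(2*a^2)+1) * a) := by rw [hRsum]
  -- now the real-number estimate
  have hcast : (F.card : ℝ) ≤ (((n/(2*a) : ℕ) : ℝ) + 1) * ((((n/(2*a^2) : ℕ)) : ℝ) + 1)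
      * (a : ℝ) := by
    have := hnat
    have h2 : ((F.card : ℕ) : ℝ) ≤ (((n/(2*a)+1) * ((n/(2*a^2)+1) * a) : ℕ) : ℝ) :=
      Nat.cast_le.mpr this
    push_cast at h2
    calc (F.card : ℝ) ≤ _ := h2
      _ = (((n/(2*a) : ℕ) : ℝ) + 1) * ((((n/(2*a^2) : ℕ)) : ℝ) + 1) * (a : ℝ) := by
        ring
  have hA : (3:ℝ) ≤ (a:ℝ) := by exact_mod_cast ha
  have hn1 : (1:ℝ) ≤ (n:ℝ) := by exact_mod_cast hn
  have h0a : (0:ℝ) < (a:ℝ) := by linarith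
  have d1 : ((n/(2*a) : ℕ) : ℝ) ≤ (n:ℝ)/(2*(a:ℝ)) := by
    have h := Nat.cast_div_le (α := ℝ) (m := n) (n := 2*a)
    push_cast at h
    exact h
  have d2 : ((n/(2*a^2) : ℕ) : ℝ) ≤ (n:ℝ)/(2*(a:ℝ)^2) := by
    have h := Nat.cast_div_le (α := ℝ) (m := n) (n := 2*a^2)
    push_cast at h
    exact h
  have hmid : (((n/(2*a) : ℕ) : ℝ) + 1) * ((((n/(2*a^2) : ℕ)) : ℝ) + 1) * (a : ℝ)
      ≤ ((n:ℝ)/(2*(a:ℝ)) + 1) * ((n:ℝ)/(2*(a:ℝ)^2) + 1) * (a:ℝ) := by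
    have p1 : (0:ℝ) ≤ ((n/(2*a) : ℕ) : ℝ) := Nat.cast_nonneg _
    have p2 : (0:ℝ) ≤ ((n/(2*a^2) : ℕ) : ℝ) := Nat.cast_nonneg _
    gcongr
  have hfinal : ((n:ℝ)/(2*(a:ℝ)) + 1) * ((n:ℝ)/(2*(a:ℝ)^2) + 1) * (a:ℝ)
      ≤ (n : ℝ) ^ 2 / (4 * (a : ℝ) ^ 2) + ((a:ℝ) + 1) * n := by
    have hexp : ((n:ℝ)/(2*(a:ℝ)) + 1) * ((n:ℝ)/(2*(a:ℝ)^2) + 1) * (a:ℝ)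
        = (n:ℝ)^2/(4*(a:ℝ)^2) + (n:ℝ)/2 + (n:ℝ)/(2*(a:ℝ)) + (a:ℝ) := by
      field_simp
      ring
    rw [hexp]
    have h2 : (n:ℝ)/(2*(a:ℝ)) ≤ (n:ℝ)/2 := by
      apply div_le_div_of_nonneg_left (by linarith) (by norm_num) (by linarith)
    have h3 : (a:ℝ) ≤ (a:ℝ)*(n:ℝ) := le_mul_of_one_le_right (by linarith) hn1
    linarith
  calc (F.card : ℝ) ≤ _ := hcast
    _ ≤ _ := hmid
    _ ≤ _ := hfinal
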